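/- Let λ > 0 and c be real constants with λc + 1 ≠ 0, and let k₁, k₂, k₃, k₄ be real constants. Define x(t) = -(λ/(λc+1))·(k₁e^{t(λc+1)} + k₂e^{-t(λc+1)}) + k₃ and y(t) = (1/(λc+1))·(k₁e^{t(λc+1)} - k₂e^{-t(λc+1)}) + k₄. Then for all t, y''(t) + x'(t)·(c + 1/λ) = 0 and x''(t) + y'(t)·λ·(λc + 1) = 0. -/

import Mathlib

private lemma hd (a b1 b2 d : ℝ) :
    HasDerivAt (fun t : ℝ => b1 * Real.exp (t * a) + b2 * Real.exp (-(t * a)) + d)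
      (a * (b1 * Real.exp (t0 * a) - b2 * Real.exp (-(t0 * a)))) t0 := by
  have h1 : HasDerivAt (fun t : ℝ => t * a) a t0 := by
    simpa using (hasDerivAt_id t0).mul_const a
  have h2 : HasDerivAt (fun t : ℝ => -(t * a)) (-a) t0 := h1.neg
  have e1 := (h1.exp.const_mul b1)
  have e2 := (h2.exp.const_mul b2)
  have := (e1.add e2).add_const d
  refine this.congr_deriv ?_
  ring

theorem stmt_0 (lam c k1 k2 k3 k4 : ℝ) (hlam : 0 < lam) (hc : lam * c + 1 ≠ 0)
    (x y : ℝ → ℝ)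
    (hx : ∀ t, x t = -(lam / (lam * c + 1)) *
      (k1 * Real.exp (t * (lam * c + 1)) + k2 * Real.exp (-(t * (lam * c + 1)))) + k3)
    (hy : ∀ t, y t = (1 / (lam * c + 1)) *
      (k1 * Real.exp (t * (lam * c + 1)) - k2 * Real.exp (-(t * (lam * c + 1)))) + k4) :
    ∀ t, deriv (deriv y) t + deriv x t * (c + 1 / lam) = 0 ∧
      deriv (deriv x) t + deriv y t * (lam * (lam * c + 1)) = 0 := by
  set a := lam * c + 1 with ha
  have hx' : x = fun t => (-(lam / a) * k1) * Real.exp (t * a) +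
      (-(lam / a) * k2) * Real.exp (-(t * a)) + k3 := by
    funext t; rw [hx]; ring
  have hy' : y = fun t => (1 / a * k1) * Real.exp (t * a) +
      (-(1 / a) * k2) * Real.exp (-(t * a)) + k4 := by
    funext t; rw [hy]; ring
  have dx : deriv x = fun t => (-lam * k1) * Real.exp (t * a) +
      (lam * k2) * Real.exp (-(t * a)) + 0 := by
    funext t
    rw [hx']
    rw [(hd a (-(lam / a) * k1) (-(lam / a) * k2) k3).deriv]
    field_simp
    ring
  have dy : deriv y = fun t => k1 * Real.exp (t * a) + k2 * Real.exp (-(t * a)) + 0 := by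
    funext t
    rw [hy']
    rw [(hd a (1 / a * k1) (-(1 / a) * k2) k4).deriv]
    field_simp
    ring
  intro t
  have ddx := (hd (t0 := t) a (-lam * k1) (lam * k2) 0).deriv
  have ddy := (hd (t0 := t) a k1 k2 0).deriv
  constructor
  · rw [dy, dx, ddy]
    have : c + 1 / lam = a / lam := by field_simp; ring
    rw [this]
    field_simp
    ring
  · rw [dx, dy, ddx]
    ring
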